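/- arXiv:2510.11452 — 3 statements merged into one kernel-verified Lean document; each statement's English description precedes it below -/
import Mathlib

section
/- In the two-player interconnected contest with Tullock contest success function with parameter γ ∈ (0,1], equilibrium outcomes are unique in the following sense: for any two Nash equilibria, (a) the induced winning probabilities p_i^k coincide for every player i and battlefield k, (b) the total effort Σ_{k∈B} e_i^k of each player i coincides, (c) the payoff Π_i of each player i coincides, and (d) at every battlefield at which both players' effective efforts are positive in some equilibrium, the pair of effective efforts (y_1^k, y_2^k) coincides across all equilibria. -/
open Finset Matrix

/-- Effective effort of a player with spillover matrix `ρ` and effort vector `e`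
at battlefield `k`: `y^k = e^k + ∑_{l ≠ k} ρ^{l,k} e^l`. -/
noncomputable def effY {m : ℕ} (ρ : Matrix (Fin m) (Fin m) ℝ) (e : Fin m → ℝ)
    (k : Fin m) : ℝ :=
  e k + ∑ l ∈ Finset.univ.erase k, ρ l k * e l

/-- Tullock contest success function with parameter `γ`.  When both effective
efforts are `0` this gives `0/0 = 0`, matching the convention. -/
noncomputable def tullock (γ y₁ y₂ : ℝ) : ℝ :=
  y₁ ^ γ / (y₁ ^ γ + y₂ ^ γ)

/-- Payoff of player `i` in the interconnected contest. -/
noncomputable def payoff {m : ℕ} (γ : ℝ) (v : Fin m → ℝ) (c : Fin 2 → ℝ)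
    (ρ : Fin 2 → Matrix (Fin m) (Fin m) ℝ) (e : Fin 2 → Fin m → ℝ) (i : Fin 2) : ℝ :=
  (∑ k, v k * tullock γ (effY (ρ i) (e i) k) (effY (ρ (1 - i)) (e (1 - i)) k))
    - c i * ∑ k, e i k

/-- Pure strategy Nash equilibrium of the interconnected contest:
nonnegative efforts, and no profitable deviation to any nonnegative effort vector. -/
def IsNashEq {m : ℕ} (γ : ℝ) (v : Fin m → ℝ) (c : Fin 2 → ℝ)
    (ρ : Fin 2 → Matrix (Fin m) (Fin m) ℝ) (e : Fin 2 → Fin m → ℝ) : Prop :=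
  (∀ i k, 0 ≤ e i k) ∧
  ∀ (i : Fin 2) (e' : Fin m → ℝ), (∀ k, 0 ≤ e' k) →
    payoff γ v c ρ (Function.update e i e') i ≤ payoff γ v c ρ e i

/-- Winning probability of player `i` at battlefield `k` under profile `e`. -/
noncomputable def eqProb {m : ℕ} (γ : ℝ) (ρ : Fin 2 → Matrix (Fin m) (Fin m) ℝ)
    (e : Fin 2 → Fin m → ℝ) (i : Fin 2) (k : Fin m) : ℝ :=
  tullock γ (effY (ρ i) (e i) k) (effY (ρ (1 - i)) (e (1 - i)) k)

namespace TullockAux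


variable {γ x x' y B : ℝ}

lemma tullock_nonneg (hx : 0 ≤ x) (hy : 0 ≤ y) : 0 ≤ tullock γ x y :=
  div_nonneg (Real.rpow_nonneg hx γ) (by positivity)

lemma tullock_zero_left (y : ℝ) (hγ : 0 < γ) : tullock γ 0 y = 0 := by
  simp [tullock, Real.zero_rpow hγ.ne']

lemma tullock_pos_zero (hγ : 0 < γ) (hx : 0 < x) : tullock γ x 0 = 1 := by
  rw [tullock, Real.zero_rpow hγ.ne', add_zero, div_self (Real.rpow_pos_of_pos hx γ).ne']

lemma frac_mono {A A' B : ℝ} (hA : 0 ≤ A) (hAA : A ≤ A') (hB : 0 ≤ B) :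
    A / (A + B) ≤ A' / (A' + B) := by
  rcases eq_or_lt_of_le (by linarith : (0:ℝ) ≤ A' + B) with h | h
  · have hA' : A' = 0 := by linarith
    have hA0 : A = 0 := by linarith
    simp [hA', hA0]
  · rcases eq_or_lt_of_le (by linarith : (0:ℝ) ≤ A + B) with h2 | h2
    · rw [← h2, div_zero]
      exact div_nonneg (by linarith) (by linarith)
    · rw [div_le_div_iff₀ h2 h]
      nlinarith

lemma tullock_mono (hγ : 0 < γ) (hx : 0 ≤ x) (hxx : x ≤ x') (hy : 0 ≤ y) :
    tullock γ x y ≤ tullock γ x' y :=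
  frac_mono (Real.rpow_nonneg hx γ) (Real.rpow_le_rpow hx hxx hγ.le) (Real.rpow_nonneg hy γ)

variable {m : ℕ} {ρi : Matrix (Fin m) (Fin m) ℝ}

lemma effY_nonneg (hρ : ∀ k l, 0 ≤ ρi k l) {a : Fin m → ℝ} (ha : ∀ l, 0 ≤ a l) (k : Fin m) :
    0 ≤ effY ρi a k :=
  add_nonneg (ha k) (Finset.sum_nonneg fun l _ => mul_nonneg (hρ l k) (ha l))

lemma effY_add (a d : Fin m → ℝ) (k : Fin m) :
    effY ρi (fun l => a l + d l) k = effY ρi a k + effY ρi d k := by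
  simp only [effY, mul_add, Finset.sum_add_distrib]
  ring

lemma effY_self_le (hρ : ∀ k l, 0 ≤ ρi k l) {d : Fin m → ℝ} (hd : ∀ l, 0 ≤ d l) (k : Fin m) :
    d k ≤ effY ρi d k := by
  have := Finset.sum_nonneg (fun l (_ : l ∈ Finset.univ.erase k) => mul_nonneg (hρ l k) (hd l))
  simp only [effY]; linarith

/-- best-response payoff against fixed opponent effective efforts -/
noncomputable def brPay {m : ℕ} (γ : ℝ) (v : Fin m → ℝ) (ci : ℝ)
    (ρi : Matrix (Fin m) (Fin m) ℝ) (Y2 : Fin m → ℝ) (x : Fin m → ℝ) : ℝ :=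
  (∑ k, v k * tullock γ (effY ρi x k) (Y2 k)) - ci * ∑ k, x k

/-- In any best response against `Y2`, no battlefield has both effective efforts zero. -/
lemma nz (hγ0 : 0 < γ) {v : Fin m → ℝ} {ci : ℝ} {Y2 a : Fin m → ℝ}
    (hv : ∀ k, 0 < v k) (hci : 0 < ci)
    (hρ : ∀ k l, 0 ≤ ρi k l) (ha : ∀ l, 0 ≤ a l) (hY2 : ∀ k, 0 ≤ Y2 k)
    (hmax : ∀ z, (∀ l, 0 ≤ z l) → brPay γ v ci ρi Y2 z ≤ brPay γ v ci ρi Y2 a)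
    (k : Fin m) : 0 < effY ρi a k ∨ 0 < Y2 k := by
  by_contra hcon
  push_neg at hcon
  obtain ⟨h1, h2⟩ := hcon
  have hYa0 : effY ρi a k = 0 := le_antisymm h1 (effY_nonneg hρ ha k)
  have hY20 : Y2 k = 0 := le_antisymm h2 (hY2 k)
  set δ : ℝ := v k / (2 * ci) with hδ
  have hδpos : 0 < δ := by have := hv k; positivity
  set d : Fin m → ℝ := fun l => if l = k then δ else 0 with hdd
  have hdnn : ∀ l, 0 ≤ d l := fun l => by
    by_cases h : l = k <;> simp [hdd, h, hδpos.le]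
  set z : Fin m → ℝ := fun l => a l + d l with hzz
  have hznn : ∀ l, 0 ≤ z l := fun l => add_nonneg (ha l) (hdnn l)
  have hkey := hmax z hznn
  have hsum_d : ∑ l, d l = δ := by simp [hdd]
  have hsum_z : ∑ l, z l = (∑ l, a l) + δ := by
    rw [hzz, Finset.sum_add_distrib, hsum_d]
  have hterm : ∀ l ∈ Finset.univ,
      v l * tullock γ (effY ρi a l) (Y2 l) + (if l = k then v k else 0)
        ≤ v l * tullock γ (effY ρi z l) (Y2 l) := by
    intro l _
    have hzeff : effY ρi z l = effY ρi a l + effY ρi d l := effY_add a d l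
    have hdeff : 0 ≤ effY ρi d l := effY_nonneg hρ hdnn l
    by_cases h : l = k
    · subst h
      have hdk : δ ≤ effY ρi d l := by
        have := effY_self_le hρ hdnn l
        simpa [hdd] using this
      have hzpos : 0 < effY ρi z l := by rw [hzeff, hYa0]; linarith
      rw [hY20, tullock_pos_zero hγ0 hzpos, hYa0, tullock_zero_left _ hγ0]
      simp
    · simp only [h, if_neg, if_false, add_zero]
      refine mul_le_mul_of_nonneg_left ?_ (hv l).le
      refine tullock_mono hγ0 (effY_nonneg hρ ha l) ?_ (hY2 l)
      rw [hzeff]; linarith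
  have hsumterm := Finset.sum_le_sum hterm
  rw [Finset.sum_add_distrib] at hsumterm
  have hite : ∑ l, (if l = k then v k else 0) = v k := by simp
  rw [hite] at hsumterm
  have hbr : brPay γ v ci ρi Y2 a + v k - ci * δ ≤ brPay γ v ci ρi Y2 z := by
    unfold brPay
    rw [hsum_z]
    have : ci * ((∑ l, a l) + δ) = ci * (∑ l, a l) + ci * δ := by ring
    rw [this]
    linarith
  have hciδ : ci * δ = v k / 2 := by
    rw [hδ]; field_simp
  have := hv k
  linarith

lemma real_le_of_forall {A C : ℝ} (h : ∀ δ : ℝ, 0 < δ → A ≤ C + δ) : A ≤ C := by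
  by_contra hc
  push_neg at hc
  have := h ((A - C) / 2) (by linarith)
  linarith

/-- The improved swap-deviation inequality. -/
lemma dev (hγ0 : 0 < γ) {v : Fin m → ℝ} {ci : ℝ} {Y2 a a' : Fin m → ℝ}
    (hv : ∀ k, 0 < v k) (hci : 0 < ci) (hρ : ∀ k l, 0 ≤ ρi k l)
    (ha' : ∀ l, 0 ≤ a' l) (hY2 : ∀ k, 0 ≤ Y2 k)
    (hmax : ∀ z, (∀ l, 0 ≤ z l) → brPay γ v ci ρi Y2 z ≤ brPay γ v ci ρi Y2 a)
    (K : Finset (Fin m)) (hK : ∀ k ∈ K, Y2 k = 0 ∧ effY ρi a' k = 0) :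
    brPay γ v ci ρi Y2 a' + ∑ k ∈ K, v k ≤ brPay γ v ci ρi Y2 a := by
  have key : ∀ δ : ℝ, 0 < δ →
      brPay γ v ci ρi Y2 a' + ∑ k ∈ K, v k
        ≤ brPay γ v ci ρi Y2 a + ci * δ * K.card := by
    intro δ hδpos
    set d : Fin m → ℝ := fun l => if l ∈ K then δ else 0 with hdd
    have hdnn : ∀ l, 0 ≤ d l := fun l => by
      by_cases h : l ∈ K <;> simp [hdd, h, hδpos.le]
    set z : Fin m → ℝ := fun l => a' l + d l with hzz
    have hznn : ∀ l, 0 ≤ z l := fun l => add_nonneg (ha' l) (hdnn l)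
    have hkey := hmax z hznn
    have hsum_d : ∑ l, d l = δ * K.card := by
      rw [hdd]
      rw [Finset.sum_ite_mem, Finset.univ_inter, Finset.sum_const, nsmul_eq_mul, mul_comm]
    have hsum_z : ∑ l, z l = (∑ l, a' l) + δ * K.card := by
      rw [hzz, Finset.sum_add_distrib, hsum_d]
    have hterm : ∀ l ∈ Finset.univ,
        v l * tullock γ (effY ρi a' l) (Y2 l) + (if l ∈ K then v l else 0)
          ≤ v l * tullock γ (effY ρi z l) (Y2 l) := by
      intro l _
      have hzeff : effY ρi z l = effY ρi a' l + effY ρi d l := effY_add a' d l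
      have hdeff : 0 ≤ effY ρi d l := effY_nonneg hρ hdnn l
      by_cases h : l ∈ K
      · obtain ⟨hY20, hYa0⟩ := hK l h
        have hdk : δ ≤ effY ρi d l := by
          have := effY_self_le hρ hdnn l
          simpa [hdd, h] using this
        have hzpos : 0 < effY ρi z l := by rw [hzeff, hYa0]; linarith
        rw [hY20, tullock_pos_zero hγ0 hzpos, hYa0, tullock_zero_left _ hγ0]
        simp [h]
      · simp only [h, if_neg, if_false, add_zero]
        refine mul_le_mul_of_nonneg_left ?_ (hv l).le
        refine tullock_mono hγ0 (effY_nonneg hρ ha' l) ?_ (hY2 l)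
        rw [hzeff]; linarith
    have hsumterm := Finset.sum_le_sum hterm
    rw [Finset.sum_add_distrib] at hsumterm
    have hite : ∑ l, (if l ∈ K then v l else 0) = ∑ k ∈ K, v k := by
      rw [Finset.sum_ite_mem, Finset.univ_inter]
    rw [hite] at hsumterm
    unfold brPay at hkey ⊢
    rw [hsum_z] at hkey
    have : ci * ((∑ l, a' l) + δ * K.card) = ci * (∑ l, a' l) + ci * δ * K.card := by ring
    rw [this] at hkey
    linarith
  apply real_le_of_forall
  intro ε hε
  have hcard : (0:ℝ) < ci * ((K.card : ℝ) + 1) := by positivity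
  have hδ : (0:ℝ) < ε / (ci * ((K.card : ℝ) + 1)) := by positivity
  have := key _ hδ
  have hb : ci * (ε / (ci * ((K.card : ℝ) + 1))) * K.card ≤ ε := by
    have h1 : ci * (ε / (ci * ((K.card : ℝ) + 1))) = ε / ((K.card : ℝ) + 1) := by
      field_simp
    rw [h1, div_mul_eq_mul_div, div_le_iff₀ (by positivity)]
    have : (0:ℝ) ≤ (K.card : ℝ) := Nat.cast_nonneg _
    nlinarith
  linarith

lemma tullock_le_one (hx : 0 ≤ x) (hy : 0 ≤ y) : tullock γ x y ≤ 1 := by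
  apply div_le_one_of_le₀
  · nlinarith [Real.rpow_nonneg hy γ]
  · positivity

lemma tullock_add (hγ : 0 < γ) (hx : 0 ≤ x) (hy : 0 ≤ y) (h : 0 < x ∨ 0 < y) :
    tullock γ x y + tullock γ y x = 1 := by
  have hd : 0 < x ^ γ + y ^ γ := by
    rcases h with h | h
    · have := Real.rpow_pos_of_pos h γ; nlinarith [Real.rpow_nonneg hy γ]
    · have := Real.rpow_pos_of_pos h γ; nlinarith [Real.rpow_nonneg hx γ]
  rw [tullock, tullock, add_comm (y ^ γ), ← add_div, div_self hd.ne']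

lemma frac_mid_strict {u u' B : ℝ} (hu : 0 ≤ u) (hu' : 0 ≤ u') (hne : u ≠ u') (hB : 0 < B) :
    u / (u + B) + u' / (u' + B) < 2 * (((u + u') / 2) / ((u + u') / 2 + B)) := by
  have h1 : 0 < u + B := by linarith
  have h2 : 0 < u' + B := by linarith
  have h3 : 0 < (u + u') / 2 + B := by linarith
  have h4 : 2 * (((u + u') / 2) / ((u + u') / 2 + B)) = (u + u') / ((u + u') / 2 + B) := by
    ring
  rw [h4, div_add_div _ _ h1.ne' h2.ne', div_lt_div_iff₀ (mul_pos h1 h2) h3]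
  have hsq : (0:ℝ) < (u - u') ^ 2 := by
    have h5 : u - u' ≠ 0 := sub_ne_zero.2 hne; positivity
  nlinarith [mul_pos h1 h2]

lemma rpow_mid (hγ0 : 0 < γ) (hγ1 : γ ≤ 1) (hx : 0 ≤ x) (hx' : 0 ≤ x') :
    (x ^ γ + x' ^ γ) / 2 ≤ ((x + x') / 2) ^ γ := by
  have h := (Real.concaveOn_rpow hγ0.le hγ1).2 (Set.mem_Ici.2 hx) (Set.mem_Ici.2 hx')
    (by norm_num : (0:ℝ) ≤ 1/2) (by norm_num : (0:ℝ) ≤ 1/2) (by norm_num)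
  simp only [smul_eq_mul] at h
  calc (x ^ γ + x' ^ γ) / 2 = 1/2 * x ^ γ + 1/2 * x' ^ γ := by ring
    _ ≤ (1/2 * x + 1/2 * x') ^ γ := h
    _ = ((x + x') / 2) ^ γ := by ring_nf

lemma tullock_mid_strict (hγ0 : 0 < γ) (hγ1 : γ ≤ 1) (hx : 0 ≤ x) (hx' : 0 ≤ x')
    (hne : x ≠ x') (hy : 0 < y) :
    tullock γ x y + tullock γ x' y < 2 * tullock γ ((x + x') / 2) y := by
  have hB : 0 < y ^ γ := Real.rpow_pos_of_pos hy γ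
  have hune : x ^ γ ≠ x' ^ γ := by
    rcases lt_or_gt_of_ne hne with h | h
    · exact (Real.rpow_lt_rpow hx h hγ0).ne
    · exact (Real.rpow_lt_rpow hx' h hγ0).ne'
  have step1 : tullock γ x y + tullock γ x' y
      < 2 * ((x ^ γ + x' ^ γ) / 2 / ((x ^ γ + x' ^ γ) / 2 + y ^ γ)) :=
    frac_mid_strict (Real.rpow_nonneg hx γ) (Real.rpow_nonneg hx' γ) hune hB
  have step2 : ((x ^ γ + x' ^ γ) / 2) / ((x ^ γ + x' ^ γ) / 2 + y ^ γ)
      ≤ ((x + x') / 2) ^ γ / (((x + x') / 2) ^ γ + y ^ γ) :=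
    frac_mono (by positivity) (rpow_mid hγ0 hγ1 hx hx') hB.le
  calc tullock γ x y + tullock γ x' y
      < 2 * ((x ^ γ + x' ^ γ) / 2 / ((x ^ γ + x' ^ γ) / 2 + y ^ γ)) := step1
    _ ≤ 2 * tullock γ ((x + x') / 2) y := by unfold tullock; linarith

lemma tullock_mid (hγ0 : 0 < γ) (hγ1 : γ ≤ 1) (hx : 0 ≤ x) (hx' : 0 ≤ x') (hy : 0 ≤ y) :
    tullock γ x y + tullock γ x' y ≤ 2 * tullock γ ((x + x') / 2) y := by
  rcases eq_or_lt_of_le hy with rfl | hy'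
  · rcases eq_or_lt_of_le hx with rfl | hx1
    · rcases eq_or_lt_of_le hx' with rfl | hx2
      · norm_num [tullock_zero_left _ hγ0]
      · rw [tullock_zero_left _ hγ0, tullock_pos_zero hγ0 hx2,
          tullock_pos_zero hγ0 (by linarith : (0:ℝ) < (0 + x')/2)]
        norm_num
    · have hmid : 0 < (x + x') / 2 := by linarith
      rw [tullock_pos_zero hγ0 hx1, tullock_pos_zero hγ0 hmid]
      have := tullock_le_one (γ := γ) hx' (le_refl (0:ℝ))
      linarith
  · rcases eq_or_ne x x' with rfl | hne
    · have h : (x + x) / 2 = x := by ring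
      rw [h]; linarith
    · exact (tullock_mid_strict hγ0 hγ1 hx hx' hne hy').le

lemma effY_half (a a' : Fin m → ℝ) (k : Fin m) :
    effY ρi (fun l => (a l + a' l) / 2) k = (effY ρi a k + effY ρi a' k) / 2 := by
  simp only [effY]
  rw [Finset.sum_congr rfl (fun l _ => (by ring :
    (ρi l k) * ((a l + a' l) / 2) = ((ρi l k) * a l + (ρi l k) * a' l) / 2)),
    ← Finset.sum_div, Finset.sum_add_distrib]
  ring

/-- Two maximizers of the best-response problem induce the same effective efforts
at every battlefield where the opponent is active. -/
lemma conc (hγ0 : 0 < γ) (hγ1 : γ ≤ 1) {v : Fin m → ℝ} {ci : ℝ} {Y2 a a' : Fin m → ℝ}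
    (hv : ∀ k, 0 < v k) (hρ : ∀ k l, 0 ≤ ρi k l)
    (ha : ∀ l, 0 ≤ a l) (ha' : ∀ l, 0 ≤ a' l) (hY2 : ∀ k, 0 ≤ Y2 k)
    (hmax : ∀ z, (∀ l, 0 ≤ z l) → brPay γ v ci ρi Y2 z ≤ brPay γ v ci ρi Y2 a)
    (heq : brPay γ v ci ρi Y2 a' = brPay γ v ci ρi Y2 a) :
    ∀ k, 0 < Y2 k → effY ρi a k = effY ρi a' k := by
  intro k hk
  by_contra hne
  set mid : Fin m → ℝ := fun l => (a l + a' l) / 2 with hmm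
  have hmidn : ∀ l, 0 ≤ mid l := fun l => by
    have := ha l; have := ha' l; simp only [hmm]; linarith
  have h1 := hmax mid hmidn
  have hsum_mid : ∑ l, mid l = ((∑ l, a l) + ∑ l, a' l) / 2 := by
    rw [hmm, ← Finset.sum_div, Finset.sum_add_distrib]
  have hbmid : brPay γ v ci ρi Y2 mid
      = (∑ l, v l * tullock γ ((effY ρi a l + effY ρi a' l) / 2) (Y2 l))
        - ci * (((∑ l, a l) + ∑ l, a' l) / 2) := by
    unfold brPay
    rw [hsum_mid]
    congr 1
    refine Finset.sum_congr rfl fun l _ => ?_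
    rw [hmm, effY_half]
  set f : Fin m → ℝ := fun l =>
    v l * (2 * tullock γ ((effY ρi a l + effY ρi a' l) / 2) (Y2 l)
      - tullock γ (effY ρi a l) (Y2 l) - tullock γ (effY ρi a' l) (Y2 l)) with hff
  have hfnn : ∀ l ∈ Finset.univ, 0 ≤ f l := by
    intro l _
    refine mul_nonneg (hv l).le ?_
    have := tullock_mid hγ0 hγ1 (effY_nonneg hρ ha l) (effY_nonneg hρ ha' l) (hY2 l)
    linarith
  have hfsum : ∑ l, f l
      = 2 * brPay γ v ci ρi Y2 mid - brPay γ v ci ρi Y2 a - brPay γ v ci ρi Y2 a' := by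
    rw [hbmid]
    unfold brPay
    rw [hff]
    simp only [mul_sub, mul_add]
    rw [Finset.sum_sub_distrib, Finset.sum_sub_distrib]
    have h2 : ∑ x, v x * (2 * tullock γ ((effY ρi a x + effY ρi a' x) / 2) (Y2 x))
        = 2 * ∑ x, v x * tullock γ ((effY ρi a x + effY ρi a' x) / 2) (Y2 x) := by
      rw [Finset.mul_sum]
      exact Finset.sum_congr rfl fun l _ => by ring
    rw [h2]; ring
  have hSle : ∑ l, f l ≤ 0 := by rw [hfsum]; linarith
  have hS0 : ∑ l, f l = 0 := le_antisymm hSle (Finset.sum_nonneg hfnn)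
  have hk0 : f k = 0 :=
    (Finset.sum_eq_zero_iff_of_nonneg hfnn).1 hS0 k (Finset.mem_univ k)
  have hstrict := tullock_mid_strict hγ0 hγ1 (effY_nonneg hρ ha k) (effY_nonneg hρ ha' k)
    hne hk
  rw [hff] at hk0
  have hvk := hv k
  simp only at hk0
  have : 2 * tullock γ ((effY ρi a k + effY ρi a' k) / 2) (Y2 k)
      - tullock γ (effY ρi a k) (Y2 k) - tullock γ (effY ρi a' k) (Y2 k) = 0 := by
    rcases mul_eq_zero.1 hk0 with h | h
    · exact absurd h hvk.ne'
    · exact h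
  linarith


lemma tullock_zero_left' (γ : ℝ) (y : ℝ) (hγ : 0 < γ) : tullock γ 0 y = 0 :=
  tullock_zero_left y hγ

lemma tullock_pos_zero' (γ x : ℝ) (hγ : 0 < γ) (hx : 0 < x) : tullock γ x 0 = 1 :=
  tullock_pos_zero hγ hx

lemma tullock_add' (γ x y : ℝ) (hγ : 0 < γ) (hx : 0 ≤ x) (hy : 0 ≤ y) (h : 0 < x ∨ 0 < y) :
    tullock γ x y + tullock γ y x = 1 :=
  tullock_add hγ hx hy h

/-- Nash equilibrium gives best response property. -/
lemma nash_brPay {γ : ℝ} {v : Fin m → ℝ} {c : Fin 2 → ℝ}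
    {ρ : Fin 2 → Matrix (Fin m) (Fin m) ℝ} {e : Fin 2 → Fin m → ℝ}
    (he : IsNashEq γ v c ρ e) (i : Fin 2) :
    ∀ z, (∀ l, 0 ≤ z l) →
      brPay γ v (c i) (ρ i) (effY (ρ (1 - i)) (e (1 - i))) z
        ≤ brPay γ v (c i) (ρ i) (effY (ρ (1 - i)) (e (1 - i))) (e i) := by
  intro z hz
  have hne : (1 - i) ≠ i := by fin_cases i <;> decide
  have h := he.2 i z hz
  unfold payoff at h
  rw [Function.update_self, Function.update_of_ne hne] at h
  exact h

lemma Tsum_add {γ : ℝ} (hγ0 : 0 < γ) {v x y : Fin m → ℝ} (hx : ∀ k, 0 ≤ x k)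
    (hy : ∀ k, 0 ≤ y k) (hnz : ∀ k, 0 < x k ∨ 0 < y k) :
    (∑ k, v k * tullock γ (x k) (y k)) + (∑ k, v k * tullock γ (y k) (x k)) = ∑ k, v k := by
  rw [← Finset.sum_add_distrib]
  refine Finset.sum_congr rfl fun k _ => ?_
  rw [← mul_add, tullock_add' γ _ _ hγ0 (hx k) (hy k) (hnz k), mul_one]

lemma Tsum_add' {γ : ℝ} (hγ0 : 0 < γ) {v x y : Fin m → ℝ} (hx : ∀ k, 0 ≤ x k)
    (hy : ∀ k, 0 ≤ y k) :
    (∑ k, v k * tullock γ (x k) (y k)) + (∑ k, v k * tullock γ (y k) (x k))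
      = (∑ k, v k) - ∑ k ∈ Finset.univ.filter (fun k => x k = 0 ∧ y k = 0), v k := by
  rw [← Finset.sum_add_distrib]
  have hcong : ∀ k ∈ Finset.univ,
      v k * tullock γ (x k) (y k) + v k * tullock γ (y k) (x k)
        = (if x k = 0 ∧ y k = 0 then 0 else v k) := by
    intro k _
    by_cases hP : x k = 0 ∧ y k = 0
    · rw [if_pos hP, hP.1, hP.2, tullock_zero_left' γ _ hγ0]; ring
    · rw [if_neg hP, ← mul_add, tullock_add' γ _ _ hγ0 (hx k) (hy k), mul_one]
      by_cases hx0 : x k = 0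
      · right
        have : y k ≠ 0 := fun h => hP ⟨hx0, h⟩
        exact lt_of_le_of_ne (hy k) (Ne.symm this)
      · left; exact lt_of_le_of_ne (hx k) (Ne.symm hx0)
  rw [Finset.sum_congr rfl hcong, Finset.sum_ite, Finset.sum_const, smul_zero, zero_add]
  have := Finset.sum_filter_add_sum_filter_not Finset.univ (fun k => x k = 0 ∧ y k = 0) v
  linarith


end TullockAux

open TullockAux

/-- uniqueness of equilibrium outcomes. -/
theorem nash_equilibrium_outcomes_unique (m : ℕ) (γ : ℝ) (hγ0 : 0 < γ) (hγ1 : γ ≤ 1)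
    (v : Fin m → ℝ) (hv : ∀ k, 0 < v k)
    (c : Fin 2 → ℝ) (hc : ∀ i, 0 < c i)
    (ρ : Fin 2 → Matrix (Fin m) (Fin m) ℝ)
    (hρ : ∀ i k l, 0 ≤ ρ i k l) (hρd : ∀ i k, ρ i k k = 0)
    (e e' : Fin 2 → Fin m → ℝ)
    (he : IsNashEq γ v c ρ e) (he' : IsNashEq γ v c ρ e') :
    (∀ i k, eqProb γ ρ e i k = eqProb γ ρ e' i k) ∧
    (∀ i, ∑ k, e i k = ∑ k, e' i k) ∧
    (∀ i, payoff γ v c ρ e i = payoff γ v c ρ e' i) ∧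
    (∀ k, (0 < effY (ρ 0) (e 0) k ∧ 0 < effY (ρ 1) (e 1) k) →
      (effY (ρ 0) (e' 0) k = effY (ρ 0) (e 0) k ∧
       effY (ρ 1) (e' 1) k = effY (ρ 1) (e 1) k)) := by
  obtain ⟨hen, -⟩ := id he
  obtain ⟨hen', -⟩ := id he'
  -- effective efforts
  set Y1 : Fin m → ℝ := effY (ρ 0) (e 0) with hY1def
  set Y2 : Fin m → ℝ := effY (ρ 1) (e 1) with hY2def
  set Z1 : Fin m → ℝ := effY (ρ 0) (e' 0) with hZ1def
  set Z2 : Fin m → ℝ := effY (ρ 1) (e' 1) with hZ2def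
  have hY1n : ∀ k, 0 ≤ Y1 k := fun k => effY_nonneg (hρ 0) (hen 0) k
  have hY2n : ∀ k, 0 ≤ Y2 k := fun k => effY_nonneg (hρ 1) (hen 1) k
  have hZ1n : ∀ k, 0 ≤ Z1 k := fun k => effY_nonneg (hρ 0) (hen' 0) k
  have hZ2n : ∀ k, 0 ≤ Z2 k := fun k => effY_nonneg (hρ 1) (hen' 1) k
  -- best response conditions
  have Ha : ∀ z, (∀ l, 0 ≤ z l) →
      brPay γ v (c 0) (ρ 0) Y2 z ≤ brPay γ v (c 0) (ρ 0) Y2 (e 0) := nash_brPay he 0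
  have Hb : ∀ z, (∀ l, 0 ≤ z l) →
      brPay γ v (c 1) (ρ 1) Y1 z ≤ brPay γ v (c 1) (ρ 1) Y1 (e 1) := nash_brPay he 1
  have Ha' : ∀ z, (∀ l, 0 ≤ z l) →
      brPay γ v (c 0) (ρ 0) Z2 z ≤ brPay γ v (c 0) (ρ 0) Z2 (e' 0) := nash_brPay he' 0
  have Hb' : ∀ z, (∀ l, 0 ≤ z l) →
      brPay γ v (c 1) (ρ 1) Z1 z ≤ brPay γ v (c 1) (ρ 1) Z1 (e' 1) := nash_brPay he' 1
  -- no battlefield with both effective efforts zero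
  have NZ1 : ∀ k, 0 < Y1 k ∨ 0 < Y2 k :=
    fun k => nz hγ0 hv (hc 0) (hρ 0) (hen 0) hY2n Ha k
  have NZ2 : ∀ k, 0 < Z1 k ∨ 0 < Z2 k :=
    fun k => nz hγ0 hv (hc 0) (hρ 0) (hen' 0) hZ2n Ha' k
  -- concession sets
  set K1 : Finset (Fin m) := Finset.univ.filter (fun k => Z1 k = 0 ∧ Y2 k = 0) with hK1def
  set K2 : Finset (Fin m) := Finset.univ.filter (fun k => Y1 k = 0 ∧ Z2 k = 0) with hK2def
  have hK1mem : ∀ k ∈ K1, Z1 k = 0 ∧ Y2 k = 0 := fun k hk => (Finset.mem_filter.1 hk).2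
  have hK2mem : ∀ k ∈ K2, Y1 k = 0 ∧ Z2 k = 0 := fun k hk => (Finset.mem_filter.1 hk).2
  -- the four improved deviation inequalities
  have D1 : brPay γ v (c 0) (ρ 0) Y2 (e' 0) + ∑ k ∈ K1, v k
      ≤ brPay γ v (c 0) (ρ 0) Y2 (e 0) :=
    dev hγ0 hv (hc 0) (hρ 0) (hen' 0) hY2n Ha K1
      (fun k hk => ⟨(hK1mem k hk).2, (hK1mem k hk).1⟩)
  have D2 : brPay γ v (c 0) (ρ 0) Z2 (e 0) + ∑ k ∈ K2, v k
      ≤ brPay γ v (c 0) (ρ 0) Z2 (e' 0) :=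
    dev hγ0 hv (hc 0) (hρ 0) (hen 0) hZ2n Ha' K2
      (fun k hk => ⟨(hK2mem k hk).2, (hK2mem k hk).1⟩)
  have D3 : brPay γ v (c 1) (ρ 1) Y1 (e' 1) + ∑ k ∈ K2, v k
      ≤ brPay γ v (c 1) (ρ 1) Y1 (e 1) :=
    dev hγ0 hv (hc 1) (hρ 1) (hen' 1) hY1n Hb K2
      (fun k hk => ⟨(hK2mem k hk).1, (hK2mem k hk).2⟩)
  have D4 : brPay γ v (c 1) (ρ 1) Z1 (e 1) + ∑ k ∈ K1, v k
      ≤ brPay γ v (c 1) (ρ 1) Z1 (e' 1) :=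
    dev hγ0 hv (hc 1) (hρ 1) (hen 1) hZ1n Hb' K1
      (fun k hk => ⟨(hK1mem k hk).1, (hK1mem k hk).2⟩)
  -- expand brPay into sums
  have br1 : brPay γ v (c 0) (ρ 0) Y2 (e 0)
      = (∑ k, v k * tullock γ (Y1 k) (Y2 k)) - c 0 * ∑ k, e 0 k := rfl
  have br2 : brPay γ v (c 0) (ρ 0) Y2 (e' 0)
      = (∑ k, v k * tullock γ (Z1 k) (Y2 k)) - c 0 * ∑ k, e' 0 k := rfl
  have br3 : brPay γ v (c 0) (ρ 0) Z2 (e 0)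
      = (∑ k, v k * tullock γ (Y1 k) (Z2 k)) - c 0 * ∑ k, e 0 k := rfl
  have br4 : brPay γ v (c 0) (ρ 0) Z2 (e' 0)
      = (∑ k, v k * tullock γ (Z1 k) (Z2 k)) - c 0 * ∑ k, e' 0 k := rfl
  have br5 : brPay γ v (c 1) (ρ 1) Y1 (e 1)
      = (∑ k, v k * tullock γ (Y2 k) (Y1 k)) - c 1 * ∑ k, e 1 k := rfl
  have br6 : brPay γ v (c 1) (ρ 1) Y1 (e' 1)
      = (∑ k, v k * tullock γ (Z2 k) (Y1 k)) - c 1 * ∑ k, e' 1 k := rfl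
  have br7 : brPay γ v (c 1) (ρ 1) Z1 (e 1)
      = (∑ k, v k * tullock γ (Y2 k) (Z1 k)) - c 1 * ∑ k, e 1 k := rfl
  have br8 : brPay γ v (c 1) (ρ 1) Z1 (e' 1)
      = (∑ k, v k * tullock γ (Z2 k) (Z1 k)) - c 1 * ∑ k, e' 1 k := rfl
  rw [br1, br2] at D1
  rw [br3, br4] at D2
  rw [br5, br6] at D3
  rw [br7, br8] at D4
  -- sum identities
  have I1 : (∑ k, v k * tullock γ (Y1 k) (Y2 k)) + (∑ k, v k * tullock γ (Y2 k) (Y1 k))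
      = ∑ k, v k := Tsum_add hγ0 hY1n hY2n NZ1
  have I2 : (∑ k, v k * tullock γ (Z1 k) (Z2 k)) + (∑ k, v k * tullock γ (Z2 k) (Z1 k))
      = ∑ k, v k := Tsum_add hγ0 hZ1n hZ2n NZ2
  have I3 : (∑ k, v k * tullock γ (Z1 k) (Y2 k)) + (∑ k, v k * tullock γ (Y2 k) (Z1 k))
      = (∑ k, v k) - ∑ k ∈ K1, v k := Tsum_add' hγ0 hZ1n hY2n
  have I4 : (∑ k, v k * tullock γ (Y1 k) (Z2 k)) + (∑ k, v k * tullock γ (Z2 k) (Y1 k))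
      = (∑ k, v k) - ∑ k ∈ K2, v k := Tsum_add' hγ0 hY1n hZ2n
  have hV1n : 0 ≤ ∑ k ∈ K1, v k := Finset.sum_nonneg fun k _ => (hv k).le
  have hV2n : 0 ≤ ∑ k ∈ K2, v k := Finset.sum_nonneg fun k _ => (hv k).le
  -- conclude both concession sets are trivial and all four are equalities
  have hV1 : ∑ k ∈ K1, v k = 0 := by linarith
  have hV2 : ∑ k ∈ K2, v k = 0 := by linarith
  have hq1 : brPay γ v (c 0) (ρ 0) Y2 (e' 0) = brPay γ v (c 0) (ρ 0) Y2 (e 0) := by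
    rw [br1, br2]; linarith
  have hq2 : brPay γ v (c 0) (ρ 0) Z2 (e 0) = brPay γ v (c 0) (ρ 0) Z2 (e' 0) := by
    rw [br3, br4]; linarith
  have hq3 : brPay γ v (c 1) (ρ 1) Y1 (e' 1) = brPay γ v (c 1) (ρ 1) Y1 (e 1) := by
    rw [br5, br6]; linarith
  have hq4 : brPay γ v (c 1) (ρ 1) Z1 (e 1) = brPay γ v (c 1) (ρ 1) Z1 (e' 1) := by
    rw [br7, br8]; linarith
  -- equal effective efforts where opponent active
  have E1 : ∀ k, 0 < Y2 k → Y1 k = Z1 k :=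
    conc hγ0 hγ1 hv (hρ 0) (hen 0) (hen' 0) hY2n Ha hq1
  have E2 : ∀ k, 0 < Z2 k → Z1 k = Y1 k :=
    conc hγ0 hγ1 hv (hρ 0) (hen' 0) (hen 0) hZ2n Ha' hq2
  have E3 : ∀ k, 0 < Y1 k → Y2 k = Z2 k :=
    conc hγ0 hγ1 hv (hρ 1) (hen 1) (hen' 1) hY1n Hb hq3
  have E4 : ∀ k, 0 < Z1 k → Z2 k = Y2 k :=
    conc hγ0 hγ1 hv (hρ 1) (hen' 1) (hen 1) hZ1n Hb' hq4
  -- emptiness of concession sets pointwise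
  have hK1e : ∀ k, ¬(Z1 k = 0 ∧ Y2 k = 0) := by
    intro k hk
    have hmem : k ∈ K1 := Finset.mem_filter.2 ⟨Finset.mem_univ k, hk⟩
    have := Finset.single_le_sum (fun l (_ : l ∈ K1) => (hv l).le) hmem
    have := hv k
    linarith [hV1]
  have hK2e : ∀ k, ¬(Y1 k = 0 ∧ Z2 k = 0) := by
    intro k hk
    have hmem : k ∈ K2 := Finset.mem_filter.2 ⟨Finset.mem_univ k, hk⟩
    have := Finset.single_le_sum (fun l (_ : l ∈ K2) => (hv l).le) hmem
    have := hv k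
    linarith [hV2]
  -- classification of battlefields
  have CLS : ∀ k, (Y1 k = Z1 k ∧ Y2 k = Z2 k ∧ 0 < Y1 k ∧ 0 < Y2 k)
      ∨ (Y1 k = 0 ∧ Z1 k = 0 ∧ 0 < Y2 k ∧ 0 < Z2 k)
      ∨ (Y2 k = 0 ∧ Z2 k = 0 ∧ 0 < Y1 k ∧ 0 < Z1 k) := by
    intro k
    rcases eq_or_lt_of_le (hY1n k) with h1 | h1
    · -- Y1 k = 0
      have hY10 : Y1 k = 0 := h1.symm
      have hY2p : 0 < Y2 k := (NZ1 k).resolve_left (by rw [hY10]; exact lt_irrefl 0)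
      have hZ10 : Z1 k = 0 := (E1 k hY2p) ▸ hY10
      have hZ2p : 0 < Z2 k := by
        rcases eq_or_lt_of_le (hZ2n k) with h2 | h2
        · exact absurd ⟨hY10, h2.symm⟩ (hK2e k)
        · exact h2
      exact Or.inr (Or.inl ⟨hY10, hZ10, hY2p, hZ2p⟩)
    · rcases eq_or_lt_of_le (hY2n k) with h2 | h2
      · -- Y2 k = 0, Y1 k > 0
        have hY20 : Y2 k = 0 := h2.symm
        have hZ20 : Z2 k = 0 := (E3 k h1) ▸ hY20
        have hZ1p : 0 < Z1 k := by
          rcases eq_or_lt_of_le (hZ1n k) with h3 | h3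
          · exact absurd ⟨h3.symm, hY20⟩ (hK1e k)
          · exact h3
        exact Or.inr (Or.inr ⟨hY20, hZ20, h1, hZ1p⟩)
      · exact Or.inl ⟨E1 k h2, E3 k h1, h1, h2⟩
  -- pointwise probability equalities
  have Pa : ∀ k, tullock γ (Y1 k) (Y2 k) = tullock γ (Z1 k) (Z2 k) := by
    intro k
    rcases CLS k with ⟨h1, h2, _, _⟩ | ⟨h1, h2, _, _⟩ | ⟨h1, h2, h3, h4⟩
    · rw [h1, h2]
    · rw [h1, h2, tullock_zero_left' γ _ hγ0, tullock_zero_left' γ _ hγ0]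
    · rw [h1, h2, tullock_pos_zero' γ _ hγ0 h3, tullock_pos_zero' γ _ hγ0 h4]
  have Pb : ∀ k, tullock γ (Y2 k) (Y1 k) = tullock γ (Z2 k) (Z1 k) := by
    intro k
    rcases CLS k with ⟨h1, h2, _, _⟩ | ⟨h1, h2, h3, h4⟩ | ⟨h1, h2, _, _⟩
    · rw [h1, h2]
    · rw [h1, h2, tullock_pos_zero' γ _ hγ0 h3, tullock_pos_zero' γ _ hγ0 h4]
    · rw [h1, h2, tullock_zero_left' γ _ hγ0, tullock_zero_left' γ _ hγ0]
  have Qa : ∀ k, tullock γ (Z1 k) (Y2 k) = tullock γ (Z1 k) (Z2 k) := by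
    intro k
    rcases CLS k with ⟨h1, h2, _, _⟩ | ⟨h1, h2, _, _⟩ | ⟨h1, h2, _, _⟩
    · rw [h2]
    · rw [h2, tullock_zero_left' γ _ hγ0, tullock_zero_left' γ _ hγ0]
    · rw [h1, h2]
  have Qb : ∀ k, tullock γ (Y2 k) (Z1 k) = tullock γ (Z2 k) (Z1 k) := by
    intro k
    rcases CLS k with ⟨h1, h2, _, _⟩ | ⟨h1, h2, h3, h4⟩ | ⟨h1, h2, _, _⟩
    · rw [h2]
    · rw [h2, tullock_pos_zero' γ _ hγ0 h3, tullock_pos_zero' γ _ hγ0 h4]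
    · rw [h1, h2]
  -- total sums of probabilities
  have TPa : (∑ k, v k * tullock γ (Y1 k) (Y2 k)) = ∑ k, v k * tullock γ (Z1 k) (Z2 k) :=
    Finset.sum_congr rfl fun k _ => by rw [Pa k]
  have TPb : (∑ k, v k * tullock γ (Y2 k) (Y1 k)) = ∑ k, v k * tullock γ (Z2 k) (Z1 k) :=
    Finset.sum_congr rfl fun k _ => by rw [Pb k]
  have TQa : (∑ k, v k * tullock γ (Z1 k) (Y2 k)) = ∑ k, v k * tullock γ (Z1 k) (Z2 k) :=
    Finset.sum_congr rfl fun k _ => by rw [Qa k]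
  have TQb : (∑ k, v k * tullock γ (Y2 k) (Z1 k)) = ∑ k, v k * tullock γ (Z2 k) (Z1 k) :=
    Finset.sum_congr rfl fun k _ => by rw [Qb k]
  -- total efforts equal
  have hS1 : ∑ k, e 0 k = ∑ k, e' 0 k := by
    rw [br1, br2] at hq1
    have h0 := (hc 0).ne'
    have : c 0 * ∑ k, e 0 k = c 0 * ∑ k, e' 0 k := by linarith [TPa, TQa]
    exact mul_left_cancel₀ h0 this
  have hS2 : ∑ k, e 1 k = ∑ k, e' 1 k := by
    rw [br7, br8] at hq4
    have h0 := (hc 1).ne'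
    have : c 1 * ∑ k, e 1 k = c 1 * ∑ k, e' 1 k := by linarith [TPb, TQb]
    exact mul_left_cancel₀ h0 this
  refine ⟨?_, ?_, ?_, ?_⟩
  · -- (a) probabilities
    intro i k
    fin_cases i
    · exact Pa k
    · exact Pb k
  · -- (b) total efforts
    intro i
    fin_cases i
    · exact hS1
    · exact hS2
  · -- (c) payoffs
    intro i
    fin_cases i
    · show (∑ k, v k * tullock γ (Y1 k) (Y2 k)) - c 0 * ∑ k, e 0 k
        = (∑ k, v k * tullock γ (Z1 k) (Z2 k)) - c 0 * ∑ k, e' 0 k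
      rw [TPa, hS1]
    · show (∑ k, v k * tullock γ (Y2 k) (Y1 k)) - c 1 * ∑ k, e 1 k
        = (∑ k, v k * tullock γ (Z2 k) (Z1 k)) - c 1 * ∑ k, e' 1 k
      rw [TPb, hS2]
  · -- (d) effective efforts
    intro k ⟨h1, h2⟩
    exact ⟨(E1 k h2).symm, (E3 k h1).symm⟩
end

section
/- In the two-player interconnected contest with Tullock contest success function with parameter γ ∈ (0,1], the set of Nash equilibria is interchangeable: if (e_1', e_2') and (e_1'', e_2'') are Nash equilibria, then (e_1', e_2'') and (e_1'', e_2') are also Nash equilibria. -/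
open Finset Matrix

variable {m : ℕ}

lemma effY_nonneg {ρ : Matrix (Fin m) (Fin m) ℝ} {e : Fin m → ℝ}
    (hρ : ∀ k l, 0 ≤ ρ k l) (he : ∀ k, 0 ≤ e k) (k : Fin m) : 0 ≤ effY ρ e k := by
  have h : 0 ≤ ∑ l ∈ Finset.univ.erase k, ρ l k * e l :=
    Finset.sum_nonneg fun l _ => mul_nonneg (hρ l k) (he l)
  have := he k
  unfold effY; linarith

lemma effY_ge (ρ : Matrix (Fin m) (Fin m) ℝ) {e : Fin m → ℝ}
    (hρ : ∀ k l, 0 ≤ ρ k l) (he : ∀ k, 0 ≤ e k) (k : Fin m) : e k ≤ effY ρ e k := by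
  have h : 0 ≤ ∑ l ∈ Finset.univ.erase k, ρ l k * e l :=
    Finset.sum_nonneg fun l _ => mul_nonneg (hρ l k) (he l)
  unfold effY; linarith

lemma effY_mono {ρ : Matrix (Fin m) (Fin m) ℝ} {e e' : Fin m → ℝ}
    (hρ : ∀ k l, 0 ≤ ρ k l) (h : ∀ k, e k ≤ e' k) (k : Fin m) :
    effY ρ e k ≤ effY ρ e' k :=
  add_le_add (h k)
    (Finset.sum_le_sum fun l _ => mul_le_mul_of_nonneg_left (h l) (hρ l k))

lemma tullock_zero_zero {γ : ℝ} (hγ : γ ≠ 0) : tullock γ 0 0 = 0 := by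
  simp [tullock, Real.zero_rpow hγ]

lemma tullock_pos_zero {γ y : ℝ} (hγ : γ ≠ 0) (hy : 0 < y) : tullock γ y 0 = 1 := by
  have h : y ^ γ ≠ 0 := ne_of_gt (Real.rpow_pos_of_pos hy γ)
  simp [tullock, Real.zero_rpow hγ, h]

lemma tullock_le_one {γ y₁ y₂ : ℝ} (h1 : 0 ≤ y₁) (h2 : 0 ≤ y₂) :
    tullock γ y₁ y₂ ≤ 1 := by
  have a1 : 0 ≤ y₁ ^ γ := Real.rpow_nonneg h1 γ
  have a2 : 0 ≤ y₂ ^ γ := Real.rpow_nonneg h2 γ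
  exact div_le_one_of_le₀ (by linarith) (by linarith)

lemma tullock_nonneg {γ y₁ y₂ : ℝ} (h1 : 0 ≤ y₁) (h2 : 0 ≤ y₂) :
    0 ≤ tullock γ y₁ y₂ := by
  have a1 : 0 ≤ y₁ ^ γ := Real.rpow_nonneg h1 γ
  have a2 : 0 ≤ y₂ ^ γ := Real.rpow_nonneg h2 γ
  exact div_nonneg a1 (by linarith)

lemma tullock_mono {γ t t' s : ℝ} (hγ : 0 < γ) (h0 : 0 ≤ t) (h : t ≤ t') (hs : 0 ≤ s) :
    tullock γ t s ≤ tullock γ t' s := by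
  have ht' : 0 ≤ t' := le_trans h0 h
  rcases eq_or_lt_of_le hs with hs0 | hs0
  · -- s = 0
    rcases eq_or_lt_of_le ht' with ht0 | ht0
    · have : t = 0 := le_antisymm (ht0 ▸ h) h0
      rw [this, ← ht0]
    · rw [← hs0, tullock_pos_zero (ne_of_gt hγ) ht0]
      exact tullock_le_one h0 le_rfl
  · have hsp : 0 < s ^ γ := Real.rpow_pos_of_pos hs0 γ
    have a1 : 0 ≤ t ^ γ := Real.rpow_nonneg h0 γ
    have hle : t ^ γ ≤ t' ^ γ := Real.rpow_le_rpow h0 h hγ.le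
    have d1 : 0 < t ^ γ + s ^ γ := by linarith
    have d2 : 0 < t' ^ γ + s ^ γ := by linarith
    rw [tullock, tullock, div_le_div_iff₀ d1 d2]
    nlinarith

lemma tullock_add {γ y₁ y₂ : ℝ} (hγ : γ ≠ 0) (h1 : 0 ≤ y₁) (h2 : 0 ≤ y₂) :
    tullock γ y₁ y₂ + tullock γ y₂ y₁
      = if y₁ = 0 ∧ y₂ = 0 then 0 else 1 := by
  by_cases hz : y₁ = 0 ∧ y₂ = 0
  · rw [if_pos hz, hz.1, hz.2, tullock_zero_zero hγ]; ring
  · rw [if_neg hz]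
    have hpos : 0 < y₁ ^ γ + y₂ ^ γ := by
      rcases (not_and_or.mp hz) with h | h
      · have : 0 < y₁ := lt_of_le_of_ne h1 (Ne.symm h)
        have := Real.rpow_pos_of_pos this γ
        have := Real.rpow_nonneg h2 γ
        linarith
      · have : 0 < y₂ := lt_of_le_of_ne h2 (Ne.symm h)
        have := Real.rpow_pos_of_pos this γ
        have := Real.rpow_nonneg h1 γ
        linarith
    rw [tullock, tullock, add_comm (y₂ ^ γ) (y₁ ^ γ), ← add_div,
      div_self (ne_of_gt hpos)]

open Classical in
/-- Total value of battlefields where both players have zero effective effort. -/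
noncomputable def Dval {m : ℕ} (v : Fin m → ℝ) (ρ : Fin 2 → Matrix (Fin m) (Fin m) ℝ)
    (e : Fin 2 → Fin m → ℝ) : ℝ :=
  ∑ k, if effY (ρ 0) (e 0) k = 0 ∧ effY (ρ 1) (e 1) k = 0 then v k else 0

lemma Dval_nonneg {v : Fin m → ℝ} {ρ : Fin 2 → Matrix (Fin m) (Fin m) ℝ}
    {e : Fin 2 → Fin m → ℝ} (hv : ∀ k, 0 < v k) : 0 ≤ Dval v ρ e := by
  classical
  refine Finset.sum_nonneg fun k _ => ?_
  split
  · exact (hv k).le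
  · exact le_rfl

open Classical in
lemma Dval_eq {v : Fin m → ℝ} {ρ : Fin 2 → Matrix (Fin m) (Fin m) ℝ}
    {e : Fin 2 → Fin m → ℝ} (i : Fin 2) :
    Dval v ρ e = ∑ k, if effY (ρ i) (e i) k = 0 ∧ effY (ρ (1 - i)) (e (1 - i)) k = 0
      then v k else 0 := by
  obtain rfl | rfl : i = 0 ∨ i = 1 := by omega
  · rfl
  · refine Finset.sum_congr rfl fun k _ => ?_
    have h11 : (1 : Fin 2) - 1 = 0 := rfl
    rw [h11]
    by_cases h : effY (ρ 0) (e 0) k = 0 ∧ effY (ρ 1) (e 1) k = 0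
    · rw [if_pos h, if_pos ⟨h.2, h.1⟩]
    · rw [if_neg h, if_neg (fun hh => h ⟨hh.2, hh.1⟩)]

lemma payoff_sum {γ : ℝ} (hγ : γ ≠ 0) {v : Fin m → ℝ} {c : Fin 2 → ℝ}
    {ρ : Fin 2 → Matrix (Fin m) (Fin m) ℝ} (hρ : ∀ i k l, 0 ≤ ρ i k l)
    {e : Fin 2 → Fin m → ℝ} (he : ∀ i k, 0 ≤ e i k) :
    payoff γ v c ρ e 0 + payoff γ v c ρ e 1 + Dval v ρ e
      = (∑ k, v k) - c 0 * (∑ k, e 0 k) - c 1 * (∑ k, e 1 k) := by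
  classical
  have h10 : (1 : Fin 2) - 0 = 1 := rfl
  have h11 : (1 : Fin 2) - 1 = 0 := rfl
  have y0 : ∀ k, 0 ≤ effY (ρ 0) (e 0) k := effY_nonneg (hρ 0) (he 0)
  have y1 : ∀ k, 0 ≤ effY (ρ 1) (e 1) k := effY_nonneg (hρ 1) (he 1)
  have key : ∀ k ∈ Finset.univ,
      v k * tullock γ (effY (ρ 0) (e 0) k) (effY (ρ 1) (e 1) k)
      + v k * tullock γ (effY (ρ 1) (e 1) k) (effY (ρ 0) (e 0) k)
      + (if effY (ρ 0) (e 0) k = 0 ∧ effY (ρ 1) (e 1) k = 0 then v k else 0)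
      = v k := by
    intro k _
    have := tullock_add hγ (y0 k) (y1 k)
    by_cases h : effY (ρ 0) (e 0) k = 0 ∧ effY (ρ 1) (e 1) k = 0
    · rw [if_pos h] at this ⊢
      linear_combination (v k) * this
    · rw [if_neg h] at this ⊢
      linear_combination (v k) * this
  have hsum : (∑ k, v k * tullock γ (effY (ρ 0) (e 0) k) (effY (ρ 1) (e 1) k))
      + (∑ k, v k * tullock γ (effY (ρ 1) (e 1) k) (effY (ρ 0) (e 0) k))
      + Dval v ρ e = ∑ k, v k := by
    rw [Dval, ← Finset.sum_add_distrib, ← Finset.sum_add_distrib]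
    exact Finset.sum_congr rfl key
  unfold payoff
  rw [h10, h11]
  linarith [hsum]

open Classical in
lemma strong_br {γ : ℝ} (hγ : 0 < γ) {v : Fin m → ℝ} (hv : ∀ k, 0 < v k)
    {c : Fin 2 → ℝ} (hc : ∀ i, 0 < c i)
    {ρ : Fin 2 → Matrix (Fin m) (Fin m) ℝ} (hρ : ∀ i k l, 0 ≤ ρ i k l)
    {e : Fin 2 → Fin m → ℝ} (he : ∀ i k, 0 ≤ e i k) (i : Fin 2)
    (hbr : ∀ f, (∀ k, 0 ≤ f k) →
      payoff γ v c ρ (Function.update e i f) i ≤ payoff γ v c ρ e i)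
    (f : Fin m → ℝ) (hf : ∀ k, 0 ≤ f k) :
    payoff γ v c ρ (Function.update e i f) i + Dval v ρ (Function.update e i f)
      ≤ payoff γ v c ρ e i := by
  have hji : (1 : Fin 2) - i ≠ i := by
    have : ∀ t : Fin 2, 1 - t ≠ t := by decide
    exact this i
  have hYnn : ∀ k, 0 ≤ effY (ρ (1 - i)) (e (1 - i)) k :=
    effY_nonneg (hρ (1 - i)) (he (1 - i))
  have hpay : ∀ g : Fin m → ℝ, payoff γ v c ρ (Function.update e i g) i
      = (∑ k, v k * tullock γ (effY (ρ i) g k) (effY (ρ (1 - i)) (e (1 - i)) k))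
        - c i * ∑ k, g k := by
    intro g
    unfold payoff
    rw [Function.update_self, Function.update_of_ne hji]
  have hD : Dval v ρ (Function.update e i f)
      = ∑ k, if effY (ρ i) f k = 0 ∧ effY (ρ (1 - i)) (e (1 - i)) k = 0
          then v k else 0 := by
    rw [Dval_eq i]
    simp only [Function.update_self, Function.update_of_ne hji]
  refine le_of_forall_pos_le_add fun ε hε => ?_
  have hcm : 0 < c i * (m + 1 : ℝ) := mul_pos (hc i) (by positivity)
  set δ : ℝ := ε / (c i * (m + 1 : ℝ)) with hδ
  have hδpos : 0 < δ := div_pos hε hcm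
  set g : Fin m → ℝ :=
    fun k => f k + if effY (ρ i) f k = 0 ∧ effY (ρ (1 - i)) (e (1 - i)) k = 0
      then δ else 0 with hg
  have hfg : ∀ k, f k ≤ g k := by
    intro k
    have : (0:ℝ) ≤ if effY (ρ i) f k = 0 ∧ effY (ρ (1 - i)) (e (1 - i)) k = 0
        then δ else 0 := by
      split
      · exact hδpos.le
      · exact le_rfl
    simp only [hg]; linarith
  have hgnn : ∀ k, 0 ≤ g k := fun k => le_trans (hf k) (hfg k)
  -- battlefieldwise gain
  have hterm : ∀ k ∈ Finset.univ,
      v k * tullock γ (effY (ρ i) f k) (effY (ρ (1 - i)) (e (1 - i)) k)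
      + (if effY (ρ i) f k = 0 ∧ effY (ρ (1 - i)) (e (1 - i)) k = 0 then v k else 0)
      ≤ v k * tullock γ (effY (ρ i) g k) (effY (ρ (1 - i)) (e (1 - i)) k) := by
    intro k _
    by_cases hk : effY (ρ i) f k = 0 ∧ effY (ρ (1 - i)) (e (1 - i)) k = 0
    · rw [if_pos hk, hk.1, hk.2, tullock_zero_zero (ne_of_gt hγ)]
      have hgk : δ ≤ g k := by
        simp only [hg]
        rw [if_pos hk]
        linarith [hf k]
      have hgpos : 0 < effY (ρ i) g k :=
        lt_of_lt_of_le (lt_of_lt_of_le hδpos hgk) (effY_ge (ρ i) (hρ i) hgnn k)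
      rw [tullock_pos_zero (ne_of_gt hγ) hgpos]
      ring_nf
      exact le_rfl
    · rw [if_neg hk]
      have hm := tullock_mono hγ (effY_nonneg (hρ i) hf k)
        (effY_mono (hρ i) hfg k) (hYnn k)
      have := mul_le_mul_of_nonneg_left hm (hv k).le
      linarith
  have hsum : (∑ k, v k * tullock γ (effY (ρ i) f k) (effY (ρ (1 - i)) (e (1 - i)) k))
      + Dval v ρ (Function.update e i f)
      ≤ ∑ k, v k * tullock γ (effY (ρ i) g k) (effY (ρ (1 - i)) (e (1 - i)) k) := by
    rw [hD, ← Finset.sum_add_distrib]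
    exact Finset.sum_le_sum hterm
  have hcost : (∑ k, g k) ≤ (∑ k, f k) + δ * m := by
    have h1 : ∀ k ∈ Finset.univ, g k ≤ f k + δ := by
      intro k _
      simp only [hg]
      split
      · exact le_rfl
      · linarith [hδpos.le]
    calc (∑ k, g k) ≤ ∑ k : Fin m, (f k + δ) := Finset.sum_le_sum h1
      _ = (∑ k, f k) + δ * m := by
          rw [Finset.sum_add_distrib, Finset.sum_const, Finset.card_univ,
            Fintype.card_fin, nsmul_eq_mul]
          ring
  have hbrg := hbr g hgnn
  rw [hpay f, hpay g] at *
  have hfin : c i * δ * ((m : ℝ) + 1) = ε := by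
    rw [hδ]; have hci := (hc i).ne'; field_simp
  have hmle : (m : ℝ) ≤ (m : ℝ) + 1 := by linarith
  have hcd : 0 ≤ c i * δ := mul_nonneg (hc i).le hδpos.le
  nlinarith [hsum, hcost, hbrg, hfin, mul_le_mul_of_nonneg_left hmle hcd]

/-- the set of Nash equilibria is interchangeable. -/
theorem nash_equilibria_interchangeable (m : ℕ) (γ : ℝ) (hγ0 : 0 < γ) (hγ1 : γ ≤ 1)
    (v : Fin m → ℝ) (hv : ∀ k, 0 < v k)
    (c : Fin 2 → ℝ) (hc : ∀ i, 0 < c i)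
    (ρ : Fin 2 → Matrix (Fin m) (Fin m) ℝ)
    (hρ : ∀ i k l, 0 ≤ ρ i k l) (hρd : ∀ i k, ρ i k k = 0)
    (e' e'' : Fin 2 → Fin m → ℝ)
    (h' : IsNashEq γ v c ρ e') (h'' : IsNashEq γ v c ρ e'') :
    IsNashEq γ v c ρ ![e' 0, e'' 1] ∧ IsNashEq γ v c ρ ![e'' 0, e' 1] := by
  classical
  obtain ⟨hP, hPbr⟩ := h'
  obtain ⟨hQ, hQbr⟩ := h''
  have hγne : γ ≠ 0 := ne_of_gt hγ0
  have u1 : Function.update e' 1 (e'' 1) = ![e' 0, e'' 1] := by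
    funext j; fin_cases j <;> simp [Function.update]
  have u2 : Function.update e'' 0 (e' 0) = ![e' 0, e'' 1] := by
    funext j; fin_cases j <;> simp [Function.update]
  have u3 : Function.update e'' 1 (e' 1) = ![e'' 0, e' 1] := by
    funext j; fin_cases j <;> simp [Function.update]
  have u4 : Function.update e' 0 (e'' 0) = ![e'' 0, e' 1] := by
    funext j; fin_cases j <;> simp [Function.update]
  have hM1nn : ∀ i k, 0 ≤ (![e' 0, e'' 1] : Fin 2 → Fin m → ℝ) i k := by
    intro i k; fin_cases i
    · simpa using hP 0 k
    · simpa using hQ 1 k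
  have hM2nn : ∀ i k, 0 ≤ (![e'' 0, e' 1] : Fin 2 → Fin m → ℝ) i k := by
    intro i k; fin_cases i
    · simpa using hQ 0 k
    · simpa using hP 1 k
  -- four strengthened best-response inequalities
  have S1 : payoff γ v c ρ ![e' 0, e'' 1] 1 + Dval v ρ ![e' 0, e'' 1]
      ≤ payoff γ v c ρ e' 1 := by
    have := strong_br hγ0 hv hc hρ hP 1 (fun f hf => hPbr 1 f hf) (e'' 1) (hQ 1)
    rwa [u1] at this
  have S2 : payoff γ v c ρ ![e' 0, e'' 1] 0 + Dval v ρ ![e' 0, e'' 1]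
      ≤ payoff γ v c ρ e'' 0 := by
    have := strong_br hγ0 hv hc hρ hQ 0 (fun f hf => hQbr 0 f hf) (e' 0) (hP 0)
    rwa [u2] at this
  have S3 : payoff γ v c ρ ![e'' 0, e' 1] 1 + Dval v ρ ![e'' 0, e' 1]
      ≤ payoff γ v c ρ e'' 1 := by
    have := strong_br hγ0 hv hc hρ hQ 1 (fun f hf => hQbr 1 f hf) (e' 1) (hP 1)
    rwa [u3] at this
  have S4 : payoff γ v c ρ ![e'' 0, e' 1] 0 + Dval v ρ ![e'' 0, e' 1]
      ≤ payoff γ v c ρ e' 0 := by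
    have := strong_br hγ0 hv hc hρ hP 0 (fun f hf => hPbr 0 f hf) (e'' 0) (hQ 0)
    rwa [u4] at this
  -- accounting identities
  have IP := payoff_sum (v := v) (c := c) (e := e') hγne hρ hP
  have IQ := payoff_sum (v := v) (c := c) (e := e'') hγne hρ hQ
  have IM1 := payoff_sum (v := v) (c := c) (e := ![e' 0, e'' 1]) hγne hρ hM1nn
  have IM2 := payoff_sum (v := v) (c := c) (e := ![e'' 0, e' 1]) hγne hρ hM2nn
  simp only [Matrix.cons_val_zero, Matrix.cons_val_one, Matrix.head_cons] at IM1 IM2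
  have DP : 0 ≤ Dval v ρ e' := Dval_nonneg hv
  have DQ : 0 ≤ Dval v ρ e'' := Dval_nonneg hv
  have DM1 : 0 ≤ Dval v ρ ![e' 0, e'' 1] := Dval_nonneg hv
  have DM2 : 0 ≤ Dval v ρ ![e'' 0, e' 1] := Dval_nonneg hv
  have eq1 : payoff γ v c ρ ![e' 0, e'' 1] 1 = payoff γ v c ρ e' 1 := by
    linarith
  have eq2 : payoff γ v c ρ ![e' 0, e'' 1] 0 = payoff γ v c ρ e'' 0 := by
    linarith
  have eq3 : payoff γ v c ρ ![e'' 0, e' 1] 1 = payoff γ v c ρ e'' 1 := by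
    linarith
  have eq4 : payoff γ v c ρ ![e'' 0, e' 1] 0 = payoff γ v c ρ e' 0 := by
    linarith
  refine ⟨⟨hM1nn, ?_⟩, hM2nn, ?_⟩
  · intro i f hf
    fin_cases i
    · show payoff γ v c ρ (Function.update ![e' 0, e'' 1] 0 f) 0
        ≤ payoff γ v c ρ ![e' 0, e'' 1] 0
      have hu : Function.update ![e' 0, e'' 1] 0 f = Function.update e'' 0 f := by
        funext j; fin_cases j <;> simp [Function.update]
      rw [hu, eq2]
      exact hQbr 0 f hf
    · show payoff γ v c ρ (Function.update ![e' 0, e'' 1] 1 f) 1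
        ≤ payoff γ v c ρ ![e' 0, e'' 1] 1
      have hu : Function.update ![e' 0, e'' 1] 1 f = Function.update e' 1 f := by
        funext j; fin_cases j <;> simp [Function.update]
      rw [hu, eq1]
      exact hPbr 1 f hf
  · intro i f hf
    fin_cases i
    · show payoff γ v c ρ (Function.update ![e'' 0, e' 1] 0 f) 0
        ≤ payoff γ v c ρ ![e'' 0, e' 1] 0
      have hu : Function.update ![e'' 0, e' 1] 0 f = Function.update e' 0 f := by
        funext j; fin_cases j <;> simp [Function.update]
      rw [hu, eq4]
      exact hPbr 0 f hf
    · show payoff γ v c ρ (Function.update ![e'' 0, e' 1] 1 f) 1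
        ≤ payoff γ v c ρ ![e'' 0, e' 1] 1
      have hu : Function.update ![e'' 0, e' 1] 1 f = Function.update e'' 1 f := by
        funext j; fin_cases j <;> simp [Function.update]
      rw [hu, eq3]
      exact hQbr 1 f hf
end

section
/- In the two-player interconnected contest with Tullock contest success function with parameter γ ∈ (0,1], assume the matrices I + ρ_i are nonsingular for i ∈ {1,2} and set μ_i = (I + ρ_i)^{-1} 𝟙, where 𝟙 is the all-ones vector. If (e_1, e_2) is an interior Nash equilibrium (e_i^k > 0 for all i and k), then μ_i^k > 0 for all i and k, the winning probabilities satisfy p_i^k = (μ_{-i}^k c_{-i})^γ / ((μ_1^k c_1)^γ + (μ_2^k c_2)^γ) for all i ∈ {1,2} and k ∈ B, and the efforts satisfy e_i = (γ/c_i) (I + ρ_iᵀ)^{-1} w_i, where w_i ∈ ℝ^B is the vector with components w_i^k = p_1^k p_2^k v^k / μ_i^k. -/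
open Finset Matrix

/-- Katz–Bonacich-type weights: `μ = (I + ρ)⁻¹ 𝟙`. -/
noncomputable def muVec {m : ℕ} (ρ : Matrix (Fin m) (Fin m) ℝ) : Fin m → ℝ :=
  (1 + ρ)⁻¹.mulVec (fun _ => 1)

lemma tullock_hasDerivAt (γ a b : ℝ) (hγ : 0 < γ) (ha : 0 < a) (hb : 0 < b) :
    HasDerivAt (fun y => tullock γ y b)
      (γ * a ^ (γ - 1) * b ^ γ / ((a ^ γ + b ^ γ) ^ 2)) a := by
  have hag : (0:ℝ) < a ^ γ := Real.rpow_pos_of_pos ha γ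
  have hbg : (0:ℝ) < b ^ γ := Real.rpow_pos_of_pos hb γ
  have hne : a ^ γ + b ^ γ ≠ 0 := by positivity
  have h1 : HasDerivAt (fun y : ℝ => y ^ γ) (γ * a ^ (γ - 1)) a :=
    Real.hasDerivAt_rpow_const (Or.inl ha.ne')
  have h2 : HasDerivAt (fun y : ℝ => y ^ γ + b ^ γ) (γ * a ^ (γ - 1)) a :=
    h1.add_const _
  have h3 := h1.div h2 hne
  simp only [tullock]
  refine h3.congr_deriv ?_
  ring

lemma hasDerivAt_tullock_affine (γ a b M t₀ : ℝ) (hγ : 0 < γ) (ha : 0 < a) (hb : 0 < b) :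
    HasDerivAt (fun t => tullock γ (a + (t - t₀) * M) b)
      (γ * a ^ (γ - 1) * b ^ γ / ((a ^ γ + b ^ γ) ^ 2) * M) t₀ := by
  have h1 : HasDerivAt (fun t : ℝ => a + (t - t₀) * M) M t₀ := by
    simpa using (((hasDerivAt_id t₀).sub_const t₀).mul_const M).const_add a
  have h2 : HasDerivAt (fun y => tullock γ y b)
      (γ * a ^ (γ - 1) * b ^ γ / ((a ^ γ + b ^ γ) ^ 2))
      ((fun t : ℝ => a + (t - t₀) * M) t₀) := by
    simpa using tullock_hasDerivAt γ a b hγ ha hb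
  exact h2.comp t₀ h1

lemma effY_sum {m : ℕ} (ρ : Matrix (Fin m) (Fin m) ℝ) (hd : ∀ k, ρ k k = 0)
    (e : Fin m → ℝ) (k : Fin m) :
    effY ρ e k = ∑ l, (1 + ρ) l k * e l := by
  rw [← Finset.add_sum_erase _ _ (Finset.mem_univ k)]
  unfold effY
  congr 1
  · simp [Matrix.add_apply, Matrix.one_apply, hd]
  · apply Finset.sum_congr rfl
    intro l hl
    have h : l ≠ k := Finset.ne_of_mem_erase hl
    simp [Matrix.add_apply, Matrix.one_apply, h]

lemma sum_mul_update {m : ℕ} (f e : Fin m → ℝ) (l : Fin m) (t : ℝ) :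
    ∑ k, f k * Function.update e l t k = (∑ k, f k * e k) + f l * (t - e l) := by
  have h : ∀ k, Function.update e l t k = e k + (if k = l then t - e l else 0) := by
    intro k
    by_cases h : k = l
    · subst h; simp
    · simp [h]
  simp only [h, mul_add, Finset.sum_add_distrib, mul_ite, mul_zero]
  rw [Finset.sum_ite_eq' Finset.univ l (fun k => f k * (t - e l))]
  simp

/-- characterization of interior equilibrium. -/
theorem interior_equilibrium_characterization (m : ℕ) (γ : ℝ) (hγ0 : 0 < γ) (hγ1 : γ ≤ 1)
    (v : Fin m → ℝ) (hv : ∀ k, 0 < v k)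
    (c : Fin 2 → ℝ) (hc : ∀ i, 0 < c i)
    (ρ : Fin 2 → Matrix (Fin m) (Fin m) ℝ)
    (hρ : ∀ i k l, 0 ≤ ρ i k l) (hρd : ∀ i k, ρ i k k = 0)
    (hdet : ∀ i, IsUnit (1 + ρ i).det)
    (e : Fin 2 → Fin m → ℝ) (he : IsNashEq γ v c ρ e)
    (hint : ∀ i k, 0 < e i k) :
    (∀ (i : Fin 2) (k : Fin m), 0 < muVec (ρ i) k) ∧
    (∀ (i : Fin 2) (k : Fin m),
      eqProb γ ρ e i k =
        (muVec (ρ (1 - i)) k * c (1 - i)) ^ γ /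
          ((muVec (ρ 0) k * c 0) ^ γ + (muVec (ρ 1) k * c 1) ^ γ)) ∧
    (∀ (i : Fin 2) (k : Fin m),
      e i k = (γ / c i) *
        ((1 + (ρ i)ᵀ)⁻¹.mulVec
          (fun l => eqProb γ ρ e 0 l * eqProb γ ρ e 1 l * v l / muVec (ρ i) l)) k) := by
  obtain ⟨hnn, hne⟩ := he
  have hij : ∀ i : Fin 2, (1 : Fin 2) - i ≠ i := by decide
  have h11 : ∀ i : Fin 2, 1 - (1 - i) = i := by decide
  have hY : ∀ (i : Fin 2) (k : Fin m), 0 < effY (ρ i) (e i) k := by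
    intro i k
    have h2 : 0 ≤ ∑ l ∈ Finset.univ.erase k, ρ i l k * e i l :=
      Finset.sum_nonneg fun l _ => mul_nonneg (hρ i l k) (hnn i l)
    have := add_pos_of_pos_of_nonneg (hint i k) h2
    simpa [effY] using this
  -- first-order conditions
  have hFOC : ∀ (i : Fin 2) (l : Fin m),
      ∑ k, (1 + ρ i) l k *
        (γ * v k * effY (ρ i) (e i) k ^ (γ - 1) * effY (ρ (1 - i)) (e (1 - i)) k ^ γ /
          ((effY (ρ i) (e i) k ^ γ + effY (ρ (1 - i)) (e (1 - i)) k ^ γ) ^ 2)) = c i := by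
    intro i l
    set φ : ℝ → ℝ :=
      fun t => payoff γ v c ρ (Function.update e i (Function.update (e i) l t)) i with hφ
    have hmax : IsLocalMax φ (e i l) := by
      have hmem : ∀ᶠ t in nhds (e i l), (0:ℝ) < t := eventually_gt_nhds (hint i l)
      filter_upwards [hmem] with t ht
      have hnn' : ∀ k, 0 ≤ Function.update (e i) l t k := by
        intro k
        rcases eq_or_ne k l with h | h
        · subst h; simpa using ht.le
        · rw [Function.update_of_ne h]; exact hnn i k
      have h1 : φ t ≤ payoff γ v c ρ e i := hne i _ hnn'
      have h2 : φ (e i l) = payoff γ v c ρ e i := by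
        simp [hφ, Function.update_eq_self]
      rw [h2]; exact h1
    have hup : ∀ (k : Fin m) (t : ℝ), effY (ρ i) (Function.update (e i) l t) k
        = effY (ρ i) (e i) k + (t - e i l) * (1 + ρ i) l k := by
      intro k t
      rw [effY_sum (ρ i) (hρd i), effY_sum (ρ i) (hρd i),
        sum_mul_update (fun m' => (1 + ρ i) m' k) (e i) l t]
      ring
    have hcost : ∀ t : ℝ, ∑ k, Function.update (e i) l t k
        = (∑ k, e i k) + (t - e i l) := by
      intro t
      have := sum_mul_update (fun _ => (1:ℝ)) (e i) l t
      simpa using this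
    have hφeq : φ = fun t =>
        (∑ k, v k * tullock γ (effY (ρ i) (e i) k + (t - e i l) * (1 + ρ i) l k)
            (effY (ρ (1 - i)) (e (1 - i)) k))
          - c i * ((∑ k, e i k) + (t - e i l)) := by
      funext t
      simp only [hφ, payoff, Function.update_self, Function.update_of_ne (hij i)]
      rw [hcost t]
      congr 1
      exact Finset.sum_congr rfl fun k _ => by rw [hup k t]
    have hder : HasDerivAt φ
        ((∑ k, v k * (γ * effY (ρ i) (e i) k ^ (γ - 1) * effY (ρ (1 - i)) (e (1 - i)) k ^ γ /
            ((effY (ρ i) (e i) k ^ γ + effY (ρ (1 - i)) (e (1 - i)) k ^ γ) ^ 2)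
            * (1 + ρ i) l k))
          - c i * 1) (e i l) := by
      rw [hφeq]
      apply HasDerivAt.sub
      · apply HasDerivAt.fun_sum
        intro k _
        exact (hasDerivAt_tullock_affine γ _ _ _ _ hγ0 (hY i k) (hY (1 - i) k)).const_mul (v k)
      · exact (((hasDerivAt_id _).sub_const _).const_add _).const_mul (c i)
    have hzero := hmax.hasDerivAt_eq_zero hder
    have hsum : ∑ k, v k * (γ * effY (ρ i) (e i) k ^ (γ - 1)
          * effY (ρ (1 - i)) (e (1 - i)) k ^ γ /
          ((effY (ρ i) (e i) k ^ γ + effY (ρ (1 - i)) (e (1 - i)) k ^ γ) ^ 2)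
          * (1 + ρ i) l k) = c i := by
      have := sub_eq_zero.mp hzero
      linarith [this]
    calc ∑ k, (1 + ρ i) l k *
        (γ * v k * effY (ρ i) (e i) k ^ (γ - 1) * effY (ρ (1 - i)) (e (1 - i)) k ^ γ /
          ((effY (ρ i) (e i) k ^ γ + effY (ρ (1 - i)) (e (1 - i)) k ^ γ) ^ 2))
        = ∑ k, v k * (γ * effY (ρ i) (e i) k ^ (γ - 1)
          * effY (ρ (1 - i)) (e (1 - i)) k ^ γ /
          ((effY (ρ i) (e i) k ^ γ + effY (ρ (1 - i)) (e (1 - i)) k ^ γ) ^ 2)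
          * (1 + ρ i) l k) := Finset.sum_congr rfl fun k _ => by ring
      _ = c i := hsum
  -- matrix inversion
  have hGmu : ∀ (i : Fin 2) (k : Fin m),
      γ * v k * effY (ρ i) (e i) k ^ (γ - 1) * effY (ρ (1 - i)) (e (1 - i)) k ^ γ /
        ((effY (ρ i) (e i) k ^ γ + effY (ρ (1 - i)) (e (1 - i)) k ^ γ) ^ 2)
      = c i * muVec (ρ i) k := by
    intro i k
    have hGdef : (1 + ρ i).mulVec
        (fun k => γ * v k * effY (ρ i) (e i) k ^ (γ - 1)
          * effY (ρ (1 - i)) (e (1 - i)) k ^ γ /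
          ((effY (ρ i) (e i) k ^ γ + effY (ρ (1 - i)) (e (1 - i)) k ^ γ) ^ 2))
        = fun _ => c i := by
      funext l
      simpa [Matrix.mulVec, dotProduct] using hFOC i l
    have h1 : ∀ x : Fin m → ℝ, (1 + ρ i)⁻¹.mulVec ((1 + ρ i).mulVec x) = x := by
      intro x
      rw [Matrix.mulVec_mulVec, Matrix.nonsing_inv_mul _ (hdet i), Matrix.one_mulVec]
    have h3 := h1 (fun k => γ * v k * effY (ρ i) (e i) k ^ (γ - 1)
          * effY (ρ (1 - i)) (e (1 - i)) k ^ γ /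
          ((effY (ρ i) (e i) k ^ γ + effY (ρ (1 - i)) (e (1 - i)) k ^ γ) ^ 2))
    rw [hGdef] at h3
    have h4 : (1 + ρ i)⁻¹.mulVec (fun _ : Fin m => c i)
        = fun k => c i * muVec (ρ i) k := by
      have h5 : (fun _ : Fin m => c i) = c i • (fun _ : Fin m => (1:ℝ)) := by
        funext; simp
      rw [h5, Matrix.mulVec_smul]
      funext k'
      simp [muVec]
    rw [h4] at h3
    exact (congrFun h3 k).symm
  -- positivity of mu
  have hmu : ∀ (i : Fin 2) (k : Fin m), 0 < muVec (ρ i) k := by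
    intro i k
    have hA := hY i k
    have hB := hY (1 - i) k
    have hGpos : 0 < γ * v k * effY (ρ i) (e i) k ^ (γ - 1)
        * effY (ρ (1 - i)) (e (1 - i)) k ^ γ /
        ((effY (ρ i) (e i) k ^ γ + effY (ρ (1 - i)) (e (1 - i)) k ^ γ) ^ 2) := by
      have hvk := hv k
      positivity
    rw [hGmu i k] at hGpos
    by_contra h
    push_neg at h
    nlinarith [hc i]
  -- positivity of probabilities
  have hppos : ∀ (i : Fin 2) (k : Fin m), 0 < eqProb γ ρ e i k := by
    intro i k
    have hA := hY i k
    have hB := hY (1 - i) k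
    unfold eqProb tullock
    positivity
  -- value of effective effort
  have hYval : ∀ (i : Fin 2) (k : Fin m), effY (ρ i) (e i) k
      = γ * (eqProb γ ρ e i k * eqProb γ ρ e (1 - i) k) * v k
        / (c i * muVec (ρ i) k) := by
    intro i k
    have hA := hY i k
    have hB := hY (1 - i) k
    have hAg : (0:ℝ) < effY (ρ i) (e i) k ^ γ := Real.rpow_pos_of_pos hA γ
    have hBg : (0:ℝ) < effY (ρ (1 - i)) (e (1 - i)) k ^ γ := Real.rpow_pos_of_pos hB γ
    have hS : effY (ρ i) (e i) k ^ γ + effY (ρ (1 - i)) (e (1 - i)) k ^ γ ≠ 0 := by positivity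
    have hprod : eqProb γ ρ e i k * eqProb γ ρ e (1 - i) k
        = effY (ρ i) (e i) k ^ γ * effY (ρ (1 - i)) (e (1 - i)) k ^ γ /
          (effY (ρ i) (e i) k ^ γ + effY (ρ (1 - i)) (e (1 - i)) k ^ γ) ^ 2 := by
      unfold eqProb tullock
      rw [h11 i]
      field_simp
      ring
    have hkey := hGmu i k
    have hApow : effY (ρ i) (e i) k ^ (γ - 1) = effY (ρ i) (e i) k ^ γ / effY (ρ i) (e i) k := by
      rw [Real.rpow_sub hA, Real.rpow_one]
    rw [hApow] at hkey
    have hcm : c i * muVec (ρ i) k ≠ 0 := (mul_pos (hc i) (hmu i k)).ne'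
    rw [hprod, eq_div_iff hcm, ← hkey]
    field_simp
  refine ⟨hmu, ?_, ?_⟩
  · -- probabilities
    intro i k
    have h10 : (1 - 0 : Fin 2) = 1 := by decide
    have h11' : (1 - 1 : Fin 2) = 0 := by decide
    have hp0 := hppos 0 k
    have hp1 := hppos 1 k
    have hK : 0 < γ * (eqProb γ ρ e 0 k * eqProb γ ρ e 1 k) * v k := by
      have := hv k; positivity
    have ha0 : 0 < c 0 * muVec (ρ 0) k := mul_pos (hc 0) (hmu 0 k)
    have ha1 : 0 < c 1 * muVec (ρ 1) k := mul_pos (hc 1) (hmu 1 k)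
    have hY0 : effY (ρ 0) (e 0) k
        = (γ * (eqProb γ ρ e 0 k * eqProb γ ρ e 1 k) * v k) / (c 0 * muVec (ρ 0) k) := by
      have := hYval 0 k; rwa [h10] at this
    have hY1 : effY (ρ 1) (e 1) k
        = (γ * (eqProb γ ρ e 0 k * eqProb γ ρ e 1 k) * v k) / (c 1 * muVec (ρ 1) k) := by
      have := hYval 1 k
      rw [h11'] at this
      rw [this]; ring
    have hKg : (0:ℝ) < (γ * (eqProb γ ρ e 0 k * eqProb γ ρ e 1 k) * v k) ^ γ :=
      Real.rpow_pos_of_pos hK γ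
    have hb0 : (0:ℝ) < (c 0 * muVec (ρ 0) k) ^ γ := Real.rpow_pos_of_pos ha0 γ
    have hb1 : (0:ℝ) < (c 1 * muVec (ρ 1) k) ^ γ := Real.rpow_pos_of_pos ha1 γ
    have hcm0 : (muVec (ρ 0) k * c 0) ^ γ = (c 0 * muVec (ρ 0) k) ^ γ := by rw [mul_comm]
    have hcm1 : (muVec (ρ 1) k * c 1) ^ γ = (c 1 * muVec (ρ 1) k) ^ γ := by rw [mul_comm]
    have htwo : ∀ j : Fin 2, j = 0 ∨ j = 1 := by decide
    rcases htwo i with rfl | rfl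
    · have h10' : ((1:Fin 2) - 0) = 1 := by decide
      unfold eqProb tullock
      rw [h10']
      rw [hY0, hY1, Real.div_rpow hK.le ha0.le, Real.div_rpow hK.le ha1.le]
      rw [hcm0, hcm1]
      have hden : (γ * (eqProb γ ρ e 0 k * eqProb γ ρ e 1 k) * v k) ^ γ / (c 0 * muVec (ρ 0) k) ^ γ
          + (γ * (eqProb γ ρ e 0 k * eqProb γ ρ e 1 k) * v k) ^ γ / (c 1 * muVec (ρ 1) k) ^ γ ≠ 0 := by
        positivity
      generalize (γ * (eqProb γ ρ e 0 k * eqProb γ ρ e 1 k) * v k) ^ γ = K at hKg hden ⊢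
      field_simp
      ring
    · have h11'' : ((1:Fin 2) - 1) = 0 := by decide
      unfold eqProb tullock
      rw [h11'']
      rw [hY0, hY1, Real.div_rpow hK.le ha0.le, Real.div_rpow hK.le ha1.le]
      rw [hcm0, hcm1]
      have hden : (γ * (eqProb γ ρ e 0 k * eqProb γ ρ e 1 k) * v k) ^ γ / (c 1 * muVec (ρ 1) k) ^ γ
          + (γ * (eqProb γ ρ e 0 k * eqProb γ ρ e 1 k) * v k) ^ γ / (c 0 * muVec (ρ 0) k) ^ γ ≠ 0 := by
        positivity
      generalize (γ * (eqProb γ ρ e 0 k * eqProb γ ρ e 1 k) * v k) ^ γ = K at hKg hden ⊢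
      field_simp
  · -- efforts
    intro i k
    have hmv : (1 + (ρ i)ᵀ).mulVec (e i) = fun k => effY (ρ i) (e i) k := by
      funext k'
      rw [effY_sum (ρ i) (hρd i)]
      simp only [Matrix.mulVec, dotProduct]
      apply Finset.sum_congr rfl
      intro l _
      congr 1
      rcases eq_or_ne k' l with h | h
      · simp [Matrix.add_apply, Matrix.transpose_apply, Matrix.one_apply, h]
      · simp [Matrix.add_apply, Matrix.transpose_apply, Matrix.one_apply, h, Ne.symm h]
    have hdetT : IsUnit (1 + (ρ i)ᵀ).det := by
      have h : (1 + (ρ i)ᵀ) = (1 + ρ i)ᵀ := by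
        rw [Matrix.transpose_add, Matrix.transpose_one]
      rw [h, Matrix.det_transpose]
      exact hdet i
    have hinv : e i = (1 + (ρ i)ᵀ)⁻¹.mulVec (fun k => effY (ρ i) (e i) k) := by
      rw [← hmv, Matrix.mulVec_mulVec, Matrix.nonsing_inv_mul _ hdetT, Matrix.one_mulVec]
    have hw : (fun l => effY (ρ i) (e i) l)
        = (γ / c i) • (fun l => eqProb γ ρ e 0 l * eqProb γ ρ e 1 l * v l / muVec (ρ i) l) := by
      funext l
      rw [hYval i l]
      have hpp : eqProb γ ρ e i l * eqProb γ ρ e (1 - i) l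
          = eqProb γ ρ e 0 l * eqProb γ ρ e 1 l := by
        have htwo : ∀ j : Fin 2, j = 0 ∨ j = 1 := by decide
        rcases htwo i with rfl | rfl
        · have h' : ((1:Fin 2) - 0) = 1 := by decide
          rw [h']
        · have h' : ((1:Fin 2) - 1) = 0 := by decide
          rw [h']; ring
      rw [hpp]
      simp only [Pi.smul_apply, smul_eq_mul]
      have hci := (hc i).ne'
      have hmui := (hmu i l).ne'
      field_simp
    conv_lhs => rw [hinv]
    rw [hw, Matrix.mulVec_smul]
    simp
end
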